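/- arXiv:0802.4187 — 2 statements merged into one kernel-verified Lean document; each statement's English description precedes it below -/
import Mathlib

section
/- Let ρ = (ρ_1, ρ_2) ∈ ℝ² be totally irrational. Suppose g ∈ Homeo₀(𝕋¹) is semi-conjugate to the rotation R_{ρ_1} : 𝕋¹ → 𝕋¹ by a continuous surjection φ (φ∘g = R_{ρ_1}∘φ), f ∈ Homeo₀(𝕋²) is semi-conjugate to R_ρ : 𝕋² → 𝕋² by a continuous surjection ψ (ψ∘f = R_ρ∘ψ), f is a skew-product over g (i.e. π_1∘f(x,y) = g(x) for all (x,y) ∈ 𝕋²), and f has a unique minimal set. Then there exists a semi-conjugacy ψ' between f and R_ρ with π_1∘ψ'(x,y) = φ(x) for all (x,y) ∈ 𝕋² (ψ' can be taken of the form ψ composed with a rotation in the first coordinate). -/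
open Filter Topology Set

noncomputable section

/-- The circle `𝕋¹ = ℝ/ℤ`. -/
abbrev T1 : Type := AddCircle (1 : ℝ)

/-- The two-torus `𝕋² = 𝕋¹ × 𝕋¹`. -/
abbrev T2 : Type := T1 × T1

/-- Projection `ℝ × ℝ → 𝕋²`. -/
def p2 : ℝ × ℝ → T2 := fun z => ((z.1 : T1), (z.2 : T1))

/-- `G` is a lift of `g : 𝕋¹ → 𝕋¹` commuting with integer translations; together with
`G` being a homeomorphism this encodes `g ∈ Homeo₀(𝕋¹)`. -/
def IsLift1 (G : ℝ ≃ₜ ℝ) (g : T1 → T1) : Prop :=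
  (∀ x : ℝ, ((G x : T1)) = g (x : T1)) ∧ ∀ (x : ℝ) (m : ℤ), G (x + m) = G x + m

/-- `F` is a lift of `f : 𝕋² → 𝕋²` commuting with integer translations; together with
`F` being a homeomorphism this encodes `f ∈ Homeo₀(𝕋²)`. -/
def IsLift2 (F : (ℝ × ℝ) ≃ₜ (ℝ × ℝ)) (f : T2 → T2) : Prop :=
  (∀ z : ℝ × ℝ, p2 (F z) = f (p2 z)) ∧
  ∀ (z : ℝ × ℝ) (m k : ℤ), F (z + ((m : ℝ), (k : ℝ))) = F z + ((m : ℝ), (k : ℝ))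

/-- `ρ = (ρ₁, ρ₂)` is totally irrational: `1, ρ₁, ρ₂` are linearly independent over `ℚ`. -/
def TotIrr2 (ρ : ℝ × ℝ) : Prop :=
  ∀ a b c : ℤ, (a : ℝ) * ρ.1 + (b : ℝ) * ρ.2 = (c : ℝ) → a = 0 ∧ b = 0

/-- `ψ` is a semi-conjugacy from `f` to `g` (a continuous surjection intertwining them). -/
def Semiconj1 (ψ : T1 → T1) (f g : T1 → T1) : Prop :=
  Continuous ψ ∧ Function.Surjective ψ ∧ ψ ∘ f = g ∘ ψ

/-- `ψ` is a semi-conjugacy from `f` to `g` (a continuous surjection intertwining them). -/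
def Semiconj2 (ψ : T2 → T2) (f g : T2 → T2) : Prop :=
  Continuous ψ ∧ Function.Surjective ψ ∧ ψ ∘ f = g ∘ ψ

/-- The rotation `R_a : 𝕋¹ → 𝕋¹`. -/
def R1 (a : ℝ) : T1 → T1 := fun x => x + (a : T1)

/-- The rotation `R_ρ : 𝕋² → 𝕋²`. -/
def R2 (ρ : ℝ × ℝ) : T2 → T2 := fun z => (z.1 + (ρ.1 : T1), z.2 + (ρ.2 : T1))

/-- `M` is a minimal set of `h`: nonempty, closed, invariant, with no proper nonempty
closed invariant subset. -/
def IsMinimalSet {α : Type*} [TopologicalSpace α] (h : α → α) (M : Set α) : Prop :=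
  M.Nonempty ∧ IsClosed M ∧ h '' M ⊆ M ∧
    ∀ M' ⊆ M, M'.Nonempty → IsClosed M' → h '' M' ⊆ M' → M' = M


/-- Every nonempty closed invariant subset of a compact space contains a minimal set. -/
lemma exists_minimalSet_subset {α : Type*} [TopologicalSpace α] [CompactSpace α]
    {f : α → α} (hf : Continuous f) {K : Set α} (hK : K.Nonempty) (hKc : IsClosed K)
    (hKi : f '' K ⊆ K) : ∃ M ⊆ K, IsMinimalSet f M := by
  set S : Set (Set α) := {A | A ⊆ K ∧ A.Nonempty ∧ IsClosed A ∧ f '' A ⊆ A} with hS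
  have hzorn : ∃ m, m ⊆ K ∧ Minimal (· ∈ S) m := by
    refine zorn_superset_nonempty S ?_ K ⟨Subset.rfl, hK, hKc, hKi⟩
    intro c hcS hchain hcne
    refine ⟨⋂₀ c, ⟨?_, ?_, ?_, ?_⟩, fun s hs => sInter_subset_of_mem hs⟩
    · obtain ⟨s, hs⟩ := hcne
      exact (sInter_subset_of_mem hs).trans (hcS hs).1
    · haveI : Nonempty c := hcne.to_subtype
      refine IsCompact.nonempty_sInter_of_directed_nonempty_isCompact_isClosed ?_
        (fun U hU => (hcS hU).2.1) (fun U hU => (hcS hU).2.2.1.isCompact)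
        (fun U hU => (hcS hU).2.2.1)
      intro A hA B hB
      rcases hchain.total hA hB with hAB | hBA
      · exact ⟨A, hA, le_refl _, hAB⟩
      · exact ⟨B, hB, hBA, le_refl _⟩
    · exact isClosed_sInter fun U hU => (hcS hU).2.2.1
    · intro y hy
      obtain ⟨x, hx, rfl⟩ := hy
      exact mem_sInter.2 fun U hU => (hcS hU).2.2.2 ⟨x, mem_sInter.1 hx U hU, rfl⟩
  obtain ⟨m, hmK, hmS, hmmin⟩ := hzorn
  refine ⟨m, hmK, hmS.2.1, hmS.2.2.1, hmS.2.2.2, ?_⟩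
  intro M' hM'm hM'ne hM'c hM'i
  exact Set.Subset.antisymm hM'm (hmmin (y := M') ⟨hM'm.trans hmS.1, hM'ne, hM'c, hM'i⟩ hM'm)

/-- **Lemma (fibred semi-conjugacies, (a)).** Let `ρ` be totally irrational, `g ∈
Homeo₀(𝕋¹)` semi-conjugate to `R_{ρ₁}` by `φ`, and `f ∈ Homeo₀(𝕋²)` a skew product over
`g` semi-conjugate to `R_ρ` by `ψ`. If `f` has a unique minimal set, then the
semi-conjugacy can be chosen so that `π₁ ∘ ψ' = φ ∘ π₁`. -/
theorem exists_fibred_semiconjugacy (ρ : ℝ × ℝ) (hρ : TotIrr2 ρ)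
    (g : T1 → T1) (G : ℝ ≃ₜ ℝ) (hg : IsLift1 G g)
    (φ : T1 → T1) (hφ : Semiconj1 φ g (R1 ρ.1))
    (f : T2 → T2) (F : (ℝ × ℝ) ≃ₜ (ℝ × ℝ)) (hf : IsLift2 F f)
    (ψ : T2 → T2) (hψ : Semiconj2 ψ f (R2 ρ))
    (hskew : ∀ z : T2, (f z).1 = g z.1)
    (hmin : ∃! M : Set T2, IsMinimalSet f M) :
    ∃ ψ' : T2 → T2, Semiconj2 ψ' f (R2 ρ) ∧ ∀ z : T2, (ψ' z).1 = φ z.1 := by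
  classical
  haveI : Fact ((0:ℝ) < 1) := ⟨one_pos⟩
  -- `f` is continuous
  have hp2 : IsQuotientMap p2 := by
    have h1 : IsOpenQuotientMap (fun x : ℝ => (x : T1)) := QuotientAddGroup.isOpenQuotientMap_mk
    have := (h1.prodMap h1).isQuotientMap
    exact this
  have hfc : Continuous f := by
    rw [hp2.continuous_iff]
    have : f ∘ p2 = p2 ∘ F := by
      funext z; exact (hf.1 z).symm
    rw [this]
    exact hp2.continuous.comp F.continuous
  obtain ⟨M, hM, hMuniq⟩ := hmin
  -- the invariant function h
  set h : T2 → T1 := fun z => (ψ z).1 - φ z.1 with hh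
  have hhc : Continuous h := (continuous_fst.comp hψ.1).sub (hφ.1.comp continuous_fst)
  have hinv : ∀ z, h (f z) = h z := by
    intro z
    have h1 : ψ (f z) = R2 ρ (ψ z) := congrFun hψ.2.2 z
    have h2 : φ (g z.1) = R1 ρ.1 (φ z.1) := congrFun hφ.2.2 z.1
    have h3 : (f z).1 = g z.1 := hskew z
    simp only [hh, h1, h3, h2, R2, R1]
    abel
  have hinv_iter : ∀ z, ∀ n : ℕ, h (f^[n] z) = h z := by
    intro z n
    induction n with
    | zero => rfl
    | succ n ih => rw [Function.iterate_succ_apply', hinv, ih]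
  -- h is constant, equal to its value at some point of M
  obtain ⟨w₀, hw₀⟩ := hM.1
  have hconst : ∀ z, h z = h w₀ := by
    intro z
    set K : Set T2 := closure (Set.range fun n : ℕ => f^[n] z) with hK
    have hKne : K.Nonempty := (range_nonempty _).closure
    have hKc : IsClosed K := isClosed_closure
    have hKi : f '' K ⊆ K := by
      refine (image_closure_subset_closure_image hfc).trans (closure_mono ?_)
      rintro y ⟨x, ⟨n, rfl⟩, rfl⟩
      exact ⟨n + 1, Function.iterate_succ_apply' f n z⟩
    have hKh : ∀ w ∈ K, h w = h z := by
      have hsub : K ⊆ h ⁻¹' {h z} := by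
        refine closure_minimal ?_ (IsClosed.preimage hhc isClosed_singleton)
        rintro y ⟨n, rfl⟩
        exact hinv_iter z n
      intro w hw
      exact hsub hw
    obtain ⟨M', hM'K, hM'min⟩ := exists_minimalSet_subset hfc hKne hKc hKi
    have : M' = M := hMuniq M' hM'min
    exact (hKh w₀ (hM'K (this ▸ hw₀))).symm
  -- build the fibred semiconjugacy
  set c : T1 := h w₀ with hc
  refine ⟨fun z => ((ψ z).1 - c, (ψ z).2), ⟨?_, ?_, ?_⟩, ?_⟩
  · exact ((continuous_fst.comp hψ.1).sub continuous_const).prodMk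
      (continuous_snd.comp hψ.1)
  · intro w
    obtain ⟨z, hz⟩ := hψ.2.1 (w.1 + c, w.2)
    refine ⟨z, ?_⟩
    show ((ψ z).1 - c, (ψ z).2) = w
    rw [hz]
    simp
  · funext z
    have h1 : ψ (f z) = R2 ρ (ψ z) := congrFun hψ.2.2 z
    simp only [Function.comp_apply, h1, R2]
    refine Prod.ext ?_ rfl
    simp only
    abel
  · intro z
    have := hconst z
    simp only [hh, ← hc] at this ⊢
    rw [sub_eq_iff_eq_add] at this ⊢
    rw [this]
    abel


end
end

section
/- Let f ∈ Homeo₀(𝕋^d) with lift F, let v ∈ ℝ^d \ {0} and λ ∈ ℝ, and suppose ρ(F) ⊆ λv + {v}^⊥ and sup_{n∈ℕ} |D_v(n,z)| ≤ C < ∞ for some z ∈ 𝕋^d. Then sup_{n∈ℕ} |D_v(n,z')| ≤ 2C for every z' in the closure of the forward orbit {f^n(z) : n ∈ ℕ} of z. -/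
open Filter Topology Set
open scoped RealInnerProductSpace

noncomputable section

abbrev E (d : ℕ) : Type := EuclideanSpace ℝ (Fin d)

/-- The integer lattice `ℤ^d` inside `ℝ^d`. -/
def intLattice (d : ℕ) : AddSubgroup (E d) where
  carrier := {x : E d | ∀ i, ∃ m : ℤ, x i = (m : ℝ)}
  zero_mem' := fun i => ⟨0, by simp⟩
  add_mem' := by
    intro a b ha hb i
    obtain ⟨m, hm⟩ := ha i
    obtain ⟨n, hn⟩ := hb i
    refine ⟨m + n, ?_⟩
    have h : (a + b) i = a i + b i := rfl
    rw [h, hm, hn]; push_cast; ring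
  neg_mem' := by
    intro a ha i
    obtain ⟨m, hm⟩ := ha i
    refine ⟨-m, ?_⟩
    have h : (-a) i = -(a i) := rfl
    rw [h, hm]; push_cast; ring

/-- The torus `𝕋^d = ℝ^d / ℤ^d`. -/
abbrev Torus (d : ℕ) : Type := E d ⧸ intLattice d

/-- The canonical projection `π : ℝ^d → 𝕋^d`. -/
def Tproj (d : ℕ) : E d → Torus d := QuotientAddGroup.mk

/-- `F` is a lift of `f`; together with `F` being a homeomorphism this encodes
`f ∈ Homeo₀(𝕋^d)` with lift `F`. -/
def IsLiftOf {d : ℕ} (F : E d ≃ₜ E d) (f : Torus d → Torus d) : Prop :=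
  (∀ z : E d, Tproj d (F z) = f (Tproj d z)) ∧
  (∀ z : E d, ∀ m ∈ intLattice d, F (z + m) = F z + m)

/-- The rotation set of `f` on `A ⊆ 𝕋^d`. -/
def rotSetOn {d : ℕ} (F : E d ≃ₜ E d) (A : Set (Torus d)) : Set (E d) :=
  {ρ | ∃ (n : ℕ → ℕ) (z : ℕ → E d), StrictMono n ∧ (∀ i, Tproj d (z i) ∈ A) ∧
      Tendsto (fun i => (n i : ℝ)⁻¹ • ((F : E d → E d)^[n i] (z i) - z i)) atTop (𝓝 ρ)}

/-- The rotation set `ρ(F)`. -/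
def rotSet {d : ℕ} (F : E d ≃ₜ E d) : Set (E d) := rotSetOn F Set.univ

/-- The deviation from the constant rotation, `D(n,z) = F^n(z) - z - nρ`. -/
def dev {d : ℕ} (F : E d ≃ₜ E d) (ρ : E d) (n : ℕ) (z : E d) : E d :=
  (F : E d → E d)^[n] z - z - (n : ℝ) • ρ

/-- The deviation parallel to `v`, `D_v(n,z) = ⟨F^n(z) - z - nρ, v⟩`. -/
def devIn {d : ℕ} (F : E d ≃ₜ E d) (ρ : E d) (v : E d) (n : ℕ) (z : E d) : ℝ :=
  ⟪dev F ρ n z, v⟫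

/-- `1, ρ_1, …, ρ_d` are linearly independent over `ℚ`. -/
def TotallyIrrational {d : ℕ} (ρ : E d) : Prop :=
  ∀ (k : Fin d → ℤ) (m : ℤ), (∑ i, (k i : ℝ) * ρ i) = (m : ℝ) → ∀ i, k i = 0

/-- `f` has bounded mean motion (w.r.t. the rotation vector `ρ`). -/
def BoundedMeanMotion {d : ℕ} (F : E d ≃ₜ E d) (ρ : E d) : Prop :=
  ∃ C : ℝ, ∀ (n : ℕ) (z : E d), ‖dev F ρ n z‖ ≤ C

/-- `f` is non-wandering: no nonempty open set is wandering. -/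
def NonWandering {d : ℕ} (f : Torus d → Torus d) : Prop :=
  ∀ U : Set (Torus d), IsOpen U → U.Nonempty → ∃ n : ℕ, 0 < n ∧ (U ∩ f^[n] '' U).Nonempty

/-- Projection of the deviation vector to the linear subspace `V`. -/
def devProj {d : ℕ} (F : E d ≃ₜ E d) (V : Submodule ℝ (E d)) (ρ : E d) (n : ℕ) (z : E d) : E d :=
  (Submodule.orthogonalProjection V (dev F ρ n z) : E d)

/-- The set of asymptotic directions `𝒜_V(z)`. -/
def asympDirs {d : ℕ} (F : E d ≃ₜ E d) (V : Submodule ℝ (E d)) (ρ : E d) (z : E d) :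
    Set (E d) :=
  {v | ‖v‖ = 1 ∧ ∀ ε > (0 : ℝ), ∀ r > (0 : ℝ), ∃ n : ℕ,
      r < ‖devProj F V ρ n z‖ ∧ ‖(‖devProj F V ρ n z‖)⁻¹ • devProj F V ρ n z - v‖ < ε}

/-- `S^+(v) = {w ∈ 𝕊^{d-1} : ⟨v,w⟩ > 0}`. -/
def Splus {d : ℕ} (v : E d) : Set (E d) := {w | ‖w‖ = 1 ∧ 0 < ⟪v, w⟫}

/-- `z` is `ε`-Lyapunov stable for `h`. -/
def LyapStable {X : Type*} [PseudoMetricSpace X] (h : X → X) (ε : ℝ) (z : X) : Prop :=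
  ∃ δ > (0 : ℝ), ∀ n : ℕ, ∀ w, dist z w < δ → dist (h^[n] z) (h^[n] w) < ε

/-- `ε_f`, the largest `ε` such that `ε`-close points have `1/2`-close images. -/
def epsF {d : ℕ} (f : Torus d → Torus d) : ℝ :=
  sSup {ε : ℝ | 0 < ε ∧ ∀ z z' : Torus d, dist z z' < ε → dist (f z) (f z') < 1 / 2}

/-- `ℤ`-indexed iterates of a homeomorphism. -/
def iterZ {d : ℕ} (F : E d ≃ₜ E d) : ℤ → E d → E d
  | .ofNat n => (F : E d → E d)^[n]
  | .negSucc n => (F.symm : E d → E d)^[n + 1]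

/-- `ℤ`-indexed deviations parallel to `v`. -/
def devZIn {d : ℕ} (F : E d ≃ₜ E d) (ρ v : E d) (n : ℤ) (z : E d) : ℝ :=
  ⟪iterZ F n z - z - (n : ℝ) • ρ, v⟫


/-- **Lemma (orbit closure).** If `ρ(F) ⊆ λv + {v}^⊥` and `sup_{n∈ℕ} |D_v(n,z)| ≤ C`,
then `sup_{n∈ℕ} |D_v(n,z')| ≤ 2C` for every `z'` in the closure of the forward orbit
of `z`. -/
theorem devIn_le_two_mul_on_orbit_closure {d : ℕ} (f : Torus d → Torus d)
    (F : E d ≃ₜ E d) (hlift : IsLiftOf F f) (v : E d) (hv : v ≠ 0) (lam : ℝ)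
    (hrot : ∀ ρ' ∈ rotSet F, ⟪ρ' - lam • v, v⟫ = 0)
    (z : E d) (C : ℝ) (hC : ∀ n : ℕ, |devIn F (lam • v) v n z| ≤ C) :
    ∀ z' : E d,
      Tproj d z' ∈ closure (Set.range fun n : ℕ => f^[n] (Tproj d z)) →
      ∀ n : ℕ, |devIn F (lam • v) v n z'| ≤ 2 * C := by
  intro z' hz' n
  -- iterates commute with lattice translation
  have hFlat : ∀ (k : ℕ) (a m : E d), m ∈ intLattice d →
      (F : E d → E d)^[k] (a + m) = (F : E d → E d)^[k] a + m := by
    intro k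
    induction k with
    | zero => intro a m _; simp
    | succ k ih =>
        intro a m hm
        rw [Function.iterate_succ_apply, Function.iterate_succ_apply,
          hlift.2 a m hm, ih _ m hm]
  -- devIn is invariant under the lattice relation
  have hinv : ∀ (k : ℕ) (a b : E d), -a + b ∈ intLattice d →
      devIn F (lam • v) v k a = devIn F (lam • v) v k b := by
    intro k a b hm
    have hb : b = a + (-a + b) := by abel
    rw [hb]
    unfold devIn dev
    rw [hFlat k a _ hm]
    congr 1
    abel
  -- lifted function on the torus
  set g : Torus d → ℝ := fun w => Quotient.liftOn' w (devIn F (lam • v) v n)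
    (fun a b h => hinv n a b (QuotientAddGroup.leftRel_apply.mp h)) with hg_def
  have hgmk : ∀ a : E d, g (Tproj d a) = devIn F (lam • v) v n a := fun a => rfl
  -- continuity of g
  have hdevcont : Continuous (devIn F (lam • v) v n) := by
    unfold devIn dev
    exact Continuous.inner
      (((F.continuous.iterate n).sub continuous_id).sub continuous_const)
      continuous_const
  have hgcont : Continuous g := by
    rw [hg_def]
    exact Continuous.quotient_liftOn' hdevcont _
  -- the closed set where |g| ≤ 2C
  have hclosed : IsClosed {w : Torus d | |g w| ≤ 2 * C} :=
    isClosed_le hgcont.abs continuous_const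
  -- projected orbit points
  have horb : ∀ k : ℕ, f^[k] (Tproj d z) = Tproj d ((F : E d → E d)^[k] z) := by
    intro k
    induction k with
    | zero => rfl
    | succ k ih =>
        rw [Function.iterate_succ_apply', Function.iterate_succ_apply', ih,
          hlift.1]
  -- cocycle identity bound on orbit points
  have hcocycle : ∀ k : ℕ, devIn F (lam • v) v n ((F : E d → E d)^[k] z) =
      devIn F (lam • v) v (n + k) z - devIn F (lam • v) v k z := by
    intro k
    unfold devIn dev
    rw [← inner_sub_left, Function.iterate_add_apply]
    congr 1
    push_cast
    rw [add_smul]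
    abel
  have hsub : Set.range (fun k : ℕ => f^[k] (Tproj d z)) ⊆
      {w : Torus d | |g w| ≤ 2 * C} := by
    rintro w ⟨k, rfl⟩
    show |g (f^[k] (Tproj d z))| ≤ 2 * C
    rw [horb k, hgmk, hcocycle k]
    calc |devIn F (lam • v) v (n + k) z - devIn F (lam • v) v k z|
        ≤ |devIn F (lam • v) v (n + k) z| + |devIn F (lam • v) v k z| :=
          abs_sub _ _
      _ ≤ C + C := add_le_add (hC (n + k)) (hC k)
      _ = 2 * C := by ring
  have := closure_minimal hsub hclosed hz'
  rw [Set.mem_setOf_eq, hgmk] at this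
  exact this

end
end
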